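/- In the group U = ²G₂^syl(q), the conjugacy class of Y(0,t₃*,0) for t₃* ∈ F_q^* is exactly {Y(0, t₃*, s₄) : s₄ ∈ F_q}, which has q elements. -/
import Mathlib


/-- The finite field with `3^(2m+1)` elements. -/
abbrev K (m : ℕ) := GaloisField 3 (2 * m + 1)

/-- Multiplication of `²G₂^syl(q)` in the coordinates `Y(t₁,t₃,t₄) ∈ F_q³`. -/
noncomputable def Ymul (m : ℕ) (x y : K m × K m × K m) : K m × K m × K m :=
  (x.1 + y.1,
   x.2.1 + y.2.1 - x.1 * y.1 ^ (3 ^ (m + 1)),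
   x.2.2 + y.2.2 + x.1 * y.1 ^ (3 ^ (m + 1) + 1) - x.1 ^ 2 * y.1 ^ (3 ^ (m + 1)) -
     x.2.1 * y.1)

/-- Inversion of `²G₂^syl(q)`. -/
noncomputable def Yinv (m : ℕ) (x : K m × K m × K m) : K m × K m × K m :=
  (-x.1, -x.2.1 - x.1 ^ (3 ^ (m + 1) + 1), -x.2.2 + x.1 ^ (3 ^ (m + 1) + 2) - x.1 * x.2.1)

lemma conj_eq (m : ℕ) (t₃ : K m) (g : K m × K m × K m) :
    Ymul m (Ymul m g (0, t₃, 0)) (Yinv m g) = (0, t₃, t₃ * g.1) := by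
  obtain ⟨a, b, c⟩ := g
  have h3 : (3 : K m) = 0 := by
    have := CharP.cast_eq_zero (K m) 3
    exact_mod_cast this
  have hodd : Odd (3 ^ (m + 1)) := Odd.pow (by decide)
  have e1 : (-a) ^ (3 ^ (m + 1)) = -(a ^ (3 ^ (m + 1))) := Odd.neg_pow hodd a
  have e2 : (-a) ^ (3 ^ (m + 1) + 1) = a ^ (3 ^ (m + 1) + 1) :=
    Even.neg_pow (Odd.add_one hodd) a
  simp only [Ymul, Yinv, e1, e2]
  refine Prod.ext (by simp) (Prod.ext ?_ ?_)
  · simp only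
    rw [zero_pow (by positivity)]
    ring
  · simp only
    rw [zero_pow (by positivity)]
    linear_combination (a ^ (3 ^ (m + 1)) * a ^ 2) * h3

/-- The conjugacy class of `Y(0,t₃*,0)`, `t₃* ≠ 0`, is `{Y(0,t₃*,s₄) : s₄ ∈ F_q}`,
of size `q`. -/
theorem stmt_10 (m : ℕ) (t₃ : K m) (ht : t₃ ≠ 0) :
    (Set.range fun g : K m × K m × K m =>
        Ymul m (Ymul m g (0, t₃, 0)) (Yinv m g)) =
      {z : K m × K m × K m | ∃ s₄ : K m, z = (0, t₃, s₄)} ∧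
    (Set.range fun g : K m × K m × K m =>
        Ymul m (Ymul m g (0, t₃, 0)) (Yinv m g)).ncard = 3 ^ (2 * m + 1) := by
  have hset : (Set.range fun g : K m × K m × K m =>
        Ymul m (Ymul m g (0, t₃, 0)) (Yinv m g)) =
      {z : K m × K m × K m | ∃ s₄ : K m, z = (0, t₃, s₄)} := by
    ext z
    constructor
    · rintro ⟨g, rfl⟩
      exact ⟨t₃ * g.1, (conj_eq m t₃ g).symm ▸ rfl⟩
    · rintro ⟨s₄, rfl⟩
      refine ⟨(s₄ * t₃⁻¹, 0, 0), ?_⟩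
      show Ymul m (Ymul m _ (0, t₃, 0)) (Yinv m _) = _
      rw [conj_eq]
      field_simp
  refine ⟨hset, ?_⟩
  rw [hset]
  have : {z : K m × K m × K m | ∃ s₄ : K m, z = (0, t₃, s₄)} =
      Set.range (fun s₄ : K m => ((0 : K m), t₃, s₄)) := by
    ext z; simp [eq_comm, Set.mem_setOf_eq]
  rw [this, ← Set.image_univ, Set.ncard_image_of_injective _ (fun x y h => by
    simpa using congrArg (fun p : K m × K m × K m => p.2.2) h), Set.ncard_univ]
  exact GaloisField.card 3 (2 * m + 1) (by omega)
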